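/- arXiv:math/9908111 — 3 statements merged into one kernel-verified Lean document; each statement's English description precedes it below -/
import Mathlib

section
/- Let (Ω₁,μ) and (Ω₂,ν) be σ-finite measure spaces, let 0 < p < r < q < ∞, and let T : L^q(μ) → L^p(ν) be any map. Suppose there exist measurable weights ω₁ : Ω₁ → [0,∞) with ‖ω₁‖_{L^{q/(q-r)}(μ)} ≤ 1 and ω₂ : Ω₂ → [0,∞) with ‖ω₂‖_{L^{p/(r-p)}(ν)} ≤ 1 such that ∫ |Tx|^r / ω₂ dν ≤ ∫ |x|^r ω₁ dμ for every x ∈ L^q(μ). Then for every n and all x₁,…,xₙ ∈ L^q(μ), ‖(∑_{k≤n} |Tx_k|^r)^{1/r}‖_{L^p(ν)} ≤ ‖(∑_{k≤n} |x_k|^r)^{1/r}‖_{L^q(μ)}. -/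
open MeasureTheory ENNReal
open scoped NNReal ENNReal

private lemma ofReal_norm_eq_coe_nnnorm (a : ℝ) : ENNReal.ofReal ‖a‖ = (‖a‖₊ : ℝ≥0∞) :=
  ENNReal.ofReal_eq_coe_nnreal (norm_nonneg a)

private lemma rpow_le_one_of_rpow_le_one {x : ℝ≥0∞} {e : ℝ} (he : 0 < e)
    (h : x ^ e ≤ 1) : x ≤ 1 := by
  have := ENNReal.rpow_le_rpow h (le_of_lt (by positivity : (0:ℝ) < 1/e))
  rwa [← ENNReal.rpow_mul, mul_one_div_cancel he.ne', ENNReal.rpow_one,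
    ENNReal.one_rpow] at this

/-- **Remark 2(1)** of the paper for `X = L^q(μ)`, `Y = L^p(ν)` (`0 < p < r < q`):
a weighted norm inequality with weights `w₁, w₂ ≥ 0`, `‖w₁‖_{L^{q/(q-r)}(μ)} ≤ 1`,
`‖w₂‖_{L^{p/(r-p)}(ν)} ≤ 1`, implies the vector-valued norm inequality (with
constant `M_{(r)}(L^p) ⬝ M^{(r)}(L^q) = 1`). -/
theorem weighted_implies_vector_valued
    {Ω₁ Ω₂ : Type*} [MeasurableSpace Ω₁] [MeasurableSpace Ω₂]
    (μ : Measure Ω₁) (ν : Measure Ω₂) [SigmaFinite μ] [SigmaFinite ν]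
    (p r q : ℝ) (hp : 0 < p) (hpr : p < r) (hrq : r < q)
    (T : Lp ℝ (ENNReal.ofReal q) μ → Lp ℝ (ENNReal.ofReal p) ν)
    (w₁ : Ω₁ → ℝ) (w₂ : Ω₂ → ℝ)
    (hw₁meas : Measurable w₁) (hw₂meas : Measurable w₂)
    (hw₁pos : ∀ ω, 0 ≤ w₁ ω) (hw₂pos : ∀ ω, 0 ≤ w₂ ω)
    (hw₁ : eLpNorm w₁ (ENNReal.ofReal (q / (q - r))) μ ≤ 1)
    (hw₂ : eLpNorm w₂ (ENNReal.ofReal (p / (r - p))) ν ≤ 1)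
    (hweighted : ∀ x : Lp ℝ (ENNReal.ofReal q) μ,
      ∫⁻ ω, ENNReal.ofReal (|T x ω| ^ r) / ENNReal.ofReal (w₂ ω) ∂ν ≤
        ∫⁻ ω, ENNReal.ofReal (|x ω| ^ r * w₁ ω) ∂μ) :
    ∀ (n : ℕ) (x : Fin n → Lp ℝ (ENNReal.ofReal q) μ),
      eLpNorm (fun ω => (∑ k, |T (x k) ω| ^ r) ^ (1 / r)) (ENNReal.ofReal p) ν ≤
        eLpNorm (fun ω => (∑ k, |x k ω| ^ r) ^ (1 / r)) (ENNReal.ofReal q) μ := by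
  intro n x
  have hr : (0:ℝ) < r := hp.trans hpr
  have hq : (0:ℝ) < q := hr.trans hrq
  have hqr : (0:ℝ) < q - r := sub_pos.2 hrq
  have hrp : (0:ℝ) < r - p := sub_pos.2 hpr
  -- the ℝ≥0∞-valued functions
  set F : Ω₂ → ℝ≥0∞ := fun ω => ∑ k, ENNReal.ofReal (|T (x k) ω| ^ r) with hF
  set G : Ω₁ → ℝ≥0∞ := fun ω => ∑ k, ENNReal.ofReal (|x k ω| ^ r) with hG
  set w₂' : Ω₂ → ℝ≥0∞ := fun ω => ENNReal.ofReal (w₂ ω) with hw₂'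
  set w₁' : Ω₁ → ℝ≥0∞ := fun ω => ENNReal.ofReal (w₁ ω) with hw₁'
  have hTk : ∀ k : Fin n, AEMeasurable
      (fun ω => ENNReal.ofReal (|T (x k) ω| ^ r)) ν := fun k =>
    ENNReal.measurable_ofReal.comp_aemeasurable
      ((measurable_abs.comp_aemeasurable
        (Lp.aestronglyMeasurable (T (x k))).aemeasurable).pow aemeasurable_const)
  have hxk : ∀ k : Fin n, AEMeasurable
      (fun ω => ENNReal.ofReal (|x k ω| ^ r)) μ := fun k =>
    ENNReal.measurable_ofReal.comp_aemeasurable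
      ((measurable_abs.comp_aemeasurable
        (Lp.aestronglyMeasurable (x k)).aemeasurable).pow aemeasurable_const)
  have hFm : AEMeasurable F ν := Finset.aemeasurable_fun_sum _ fun k _ => hTk k
  have hGm : AEMeasurable G μ := Finset.aemeasurable_fun_sum _ fun k _ => hxk k
  have hw₂'m : Measurable w₂' := ENNReal.measurable_ofReal.comp hw₂meas
  have hw₁'m : Measurable w₁' := ENNReal.measurable_ofReal.comp hw₁meas
  -- step 1 : ∫ F / w₂' ≤ ∫ G * w₁'
  have step1 : ∫⁻ ω, F ω / w₂' ω ∂ν ≤ ∫⁻ ω, G ω * w₁' ω ∂μ := by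
    have h₁ : ∫⁻ ω, F ω / w₂' ω ∂ν =
        ∑ k, ∫⁻ ω, ENNReal.ofReal (|T (x k) ω| ^ r) / w₂' ω ∂ν := by
      rw [← lintegral_finset_sum' (f := fun k ω => ENNReal.ofReal (|T (x k) ω| ^ r) / w₂' ω) _ fun k _ => (hTk k).div hw₂'m.aemeasurable]
      refine lintegral_congr fun ω => ?_
      simp only [hF, div_eq_mul_inv, Finset.sum_mul]
    have h₂ : ∑ k, ∫⁻ ω, ENNReal.ofReal (|x k ω| ^ r * w₁ ω) ∂μ =
        ∫⁻ ω, G ω * w₁' ω ∂μ := by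
      have hprod : ∀ (k : Fin n) (ω : Ω₁), ENNReal.ofReal (|x k ω| ^ r * w₁ ω) =
          ENNReal.ofReal (|x k ω| ^ r) * w₁' ω := fun k ω =>
        ENNReal.ofReal_mul (by positivity)
      simp_rw [hprod]
      rw [← lintegral_finset_sum' (f := fun k ω => ENNReal.ofReal (|x k ω| ^ r) * w₁' ω) _ fun k _ => (hxk k).mul hw₁'m.aemeasurable]
      refine lintegral_congr fun ω => ?_
      simp only [hG, Finset.sum_mul]
    rw [h₁, ← h₂]
    exact Finset.sum_le_sum fun k _ => hweighted (x k)
  -- norms of the weights in ℝ≥0∞ form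
  have hone : ∀ {y : Ω₂ → ℝ} (hy : ∀ ω, 0 ≤ y ω), ∀ ω, (‖y ω‖₊ : ℝ≥0∞) = ENNReal.ofReal (y ω) := by
    intro y hy ω
    rw [← ofReal_norm_eq_coe_nnnorm, Real.norm_eq_abs, abs_of_nonneg (hy ω)]
  -- step 2 : Hölder upstairs
  have step2 : ∫⁻ ω, G ω * w₁' ω ∂μ ≤ (∫⁻ ω, G ω ^ (q / r) ∂μ) ^ (r / q) := by
    have hpq : (q / r).HolderConjugate (q / (q - r)) := by
      rw [Real.holderConjugate_iff]; constructor
      · exact (one_lt_div hr).2 hrq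
      · rw [inv_div, inv_div]
        field_simp
        ring
    have := ENNReal.lintegral_mul_le_Lp_mul_Lq μ hpq hGm hw₁'m.aemeasurable
    have hw₁le : (∫⁻ ω, w₁' ω ^ (q / (q - r)) ∂μ) ^ (1 / (q / (q - r))) ≤ 1 := by
      have hne : ENNReal.ofReal (q / (q - r)) ≠ 0 := by
        simp [ENNReal.ofReal_eq_zero, not_le, div_pos hq hqr]
      have h := hw₁
      rw [eLpNorm_eq_lintegral_rpow_enorm_toReal hne ENNReal.ofReal_ne_top,
        ENNReal.toReal_ofReal (by positivity)] at h
      calc (∫⁻ ω, w₁' ω ^ (q / (q - r)) ∂μ) ^ (1 / (q / (q - r)))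
          = (∫⁻ ω, (‖w₁ ω‖₊ : ℝ≥0∞) ^ (q / (q - r)) ∂μ) ^ (1 / (q / (q - r))) := by
            congr 1
            exact lintegral_congr fun ω => by
              rw [← ofReal_norm_eq_coe_nnnorm, Real.norm_eq_abs, abs_of_nonneg (hw₁pos ω)]
        _ ≤ 1 := h
    calc ∫⁻ ω, G ω * w₁' ω ∂μ
        = ∫⁻ ω, (G * w₁') ω ∂μ := rfl
      _ ≤ (∫⁻ ω, G ω ^ (q / r) ∂μ) ^ (1 / (q / r)) *
            (∫⁻ ω, w₁' ω ^ (q / (q - r)) ∂μ) ^ (1 / (q / (q - r))) := this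
      _ ≤ (∫⁻ ω, G ω ^ (q / r) ∂μ) ^ (1 / (q / r)) * 1 :=
            by gcongr
      _ = (∫⁻ ω, G ω ^ (q / r) ∂μ) ^ (r / q) := by rw [mul_one, one_div_div]
  -- step 3 : reverse Hölder downstairs
  have step3 : ∫⁻ ω, F ω ^ (p / r) ∂ν ≤ (∫⁻ ω, F ω / w₂' ω ∂ν) ^ (p / r) := by
    by_cases hAtop : ∫⁻ ω, F ω / w₂' ω ∂ν = ∞
    · rw [hAtop, ENNReal.top_rpow_of_pos (by positivity)]
      exact le_top
    · have hfin : ∀ᵐ ω ∂ν, F ω / w₂' ω < ∞ :=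
        ae_lt_top' (hFm.div hw₂'m.aemeasurable) hAtop
      have hptwise : ∀ᵐ ω ∂ν, F ω ≤ (F ω / w₂' ω) * w₂' ω := by
        filter_upwards [hfin] with ω hω
        by_cases h0 : w₂' ω = 0
        · have : F ω = 0 := by
            by_contra hne
            rw [h0, ENNReal.div_zero hne] at hω
            exact absurd hω (lt_irrefl _)
          simp [this]
        · rw [ENNReal.div_mul_cancel h0 (by simp [hw₂'])]
      have hw₂le : (∫⁻ ω, w₂' ω ^ (p / (r - p)) ∂ν) ≤ 1 := by
        have hne : ENNReal.ofReal (p / (r - p)) ≠ 0 := by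
          simp [ENNReal.ofReal_eq_zero, not_le, div_pos hp hrp]
        have h := hw₂
        rw [eLpNorm_eq_lintegral_rpow_enorm_toReal hne ENNReal.ofReal_ne_top,
          ENNReal.toReal_ofReal (by positivity)] at h
        have h' : (∫⁻ ω, w₂' ω ^ (p / (r - p)) ∂ν) ^ (1 / (p / (r - p))) ≤ 1 := by
          calc (∫⁻ ω, w₂' ω ^ (p / (r - p)) ∂ν) ^ (1 / (p / (r - p)))
              = (∫⁻ ω, (‖w₂ ω‖₊ : ℝ≥0∞) ^ (p / (r - p)) ∂ν) ^ (1 / (p / (r - p))) := by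
                congr 1
                exact lintegral_congr fun ω => by
                  rw [← ofReal_norm_eq_coe_nnnorm, Real.norm_eq_abs, abs_of_nonneg (hw₂pos ω)]
            _ ≤ 1 := h
        exact rpow_le_one_of_rpow_le_one
          (by rw [one_div]; positivity) h'
      have hpq2 : (r / p).HolderConjugate (r / (r - p)) := by
        rw [Real.holderConjugate_iff]; constructor
        · exact (one_lt_div hp).2 hpr
        · rw [inv_div, inv_div]
          field_simp
          ring
      have hHolder := ENNReal.lintegral_mul_le_Lp_mul_Lq ν hpq2
        (((hFm.div hw₂'m.aemeasurable)).pow aemeasurable_const)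
        (hw₂'m.aemeasurable.pow aemeasurable_const)
        (f := fun ω => (F ω / w₂' ω) ^ (p / r)) (g := fun ω => w₂' ω ^ (p / r))
      have e1 : ∀ ω, ((F ω / w₂' ω) ^ (p / r)) ^ (r / p) = F ω / w₂' ω := fun ω => by
        rw [← ENNReal.rpow_mul, div_mul_div_comm, mul_comm p r, div_self (by positivity),
          ENNReal.rpow_one]
      have e2 : ∀ ω, (w₂' ω ^ (p / r)) ^ (r / (r - p)) = w₂' ω ^ (p / (r - p)) := fun ω => by
        rw [← ENNReal.rpow_mul]
        congr 1
        rw [div_mul_div_comm, mul_comm p r, mul_comm r (r - p), mul_comm (r - p) r]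
        exact mul_div_mul_left p (r - p) hr.ne'
      calc ∫⁻ ω, F ω ^ (p / r) ∂ν
          ≤ ∫⁻ ω, ((F ω / w₂' ω) * w₂' ω) ^ (p / r) ∂ν := by
            refine lintegral_mono_ae ?_
            filter_upwards [hptwise] with ω hω
            exact ENNReal.rpow_le_rpow hω (by positivity)
        _ = ∫⁻ ω, ((fun ω => (F ω / w₂' ω) ^ (p / r)) * fun ω => w₂' ω ^ (p / r)) ω ∂ν := by
            refine lintegral_congr fun ω => ?_
            simp only [Pi.mul_apply]
            exact ENNReal.mul_rpow_of_nonneg _ _ (by positivity)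
        _ ≤ (∫⁻ ω, ((F ω / w₂' ω) ^ (p / r)) ^ (r / p) ∂ν) ^ (1 / (r / p)) *
              (∫⁻ ω, (w₂' ω ^ (p / r)) ^ (r / (r - p)) ∂ν) ^ (1 / (r / (r - p))) := hHolder
        _ = (∫⁻ ω, F ω / w₂' ω ∂ν) ^ (p / r) *
              (∫⁻ ω, w₂' ω ^ (p / (r - p)) ∂ν) ^ ((r - p) / r) := by
            simp_rw [e1, e2, one_div_div]
        _ ≤ (∫⁻ ω, F ω / w₂' ω ∂ν) ^ (p / r) * 1 :=
            by gcongr; exact ENNReal.rpow_le_one hw₂le (by positivity)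
        _ = (∫⁻ ω, F ω / w₂' ω ∂ν) ^ (p / r) := mul_one _
  -- identify the two eLpNorms
  have key : ∀ (s : Finset (Fin n)) (y : Fin n → ℝ) (e : ℝ), 0 < e →
      (‖(∑ k ∈ s, |y k| ^ r) ^ (1 / r)‖₊ : ℝ≥0∞) ^ e =
        (∑ k ∈ s, ENNReal.ofReal (|y k| ^ r)) ^ (e / r) := by
    intro s y e he
    have hsum : (0:ℝ) ≤ ∑ k ∈ s, |y k| ^ r := Finset.sum_nonneg fun k _ => by positivity
    rw [← ofReal_norm_eq_coe_nnnorm, Real.norm_eq_abs, abs_of_nonneg (by positivity),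
      ENNReal.ofReal_rpow_of_nonneg (by positivity) he.le, ← Real.rpow_mul hsum,
      one_div, inv_mul_eq_div, ← ENNReal.ofReal_rpow_of_nonneg hsum (by positivity),
      ENNReal.ofReal_sum_of_nonneg fun k _ => by positivity]
  have hLHS : eLpNorm (fun ω => (∑ k, |T (x k) ω| ^ r) ^ (1 / r)) (ENNReal.ofReal p) ν
      = (∫⁻ ω, F ω ^ (p / r) ∂ν) ^ (1 / p) := by
    rw [eLpNorm_eq_lintegral_rpow_enorm_toReal
      (by simp [ENNReal.ofReal_eq_zero, not_le, hp]) ENNReal.ofReal_ne_top,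
      ENNReal.toReal_ofReal hp.le]
    congr 1
    exact lintegral_congr fun ω => key Finset.univ (fun k => T (x k) ω) p hp
  have hRHS : eLpNorm (fun ω => (∑ k, |x k ω| ^ r) ^ (1 / r)) (ENNReal.ofReal q) μ
      = (∫⁻ ω, G ω ^ (q / r) ∂μ) ^ (1 / q) := by
    rw [eLpNorm_eq_lintegral_rpow_enorm_toReal
      (by simp [ENNReal.ofReal_eq_zero, not_le, hq]) ENNReal.ofReal_ne_top,
      ENNReal.toReal_ofReal hq.le]
    congr 1
    exact lintegral_congr fun ω => key Finset.univ (fun k => x k ω) q hq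
  -- combine
  rw [hLHS, hRHS]
  have chain : ∫⁻ ω, F ω ^ (p / r) ∂ν ≤ ((∫⁻ ω, G ω ^ (q / r) ∂μ) ^ (1 / q)) ^ p :=
    calc ∫⁻ ω, F ω ^ (p / r) ∂ν
        ≤ (∫⁻ ω, F ω / w₂' ω ∂ν) ^ (p / r) := step3
      _ ≤ ((∫⁻ ω, G ω ^ (q / r) ∂μ) ^ (r / q)) ^ (p / r) :=
          ENNReal.rpow_le_rpow (le_trans step1 step2) (by positivity)
      _ = ((∫⁻ ω, G ω ^ (q / r) ∂μ) ^ (1 / q)) ^ p := by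
          rw [← ENNReal.rpow_mul, ← ENNReal.rpow_mul]
          congr 1
          field_simp
  calc (∫⁻ ω, F ω ^ (p / r) ∂ν) ^ (1 / p)
      ≤ (((∫⁻ ω, G ω ^ (q / r) ∂μ) ^ (1 / q)) ^ p) ^ (1 / p) :=
        ENNReal.rpow_le_rpow chain (by positivity)
    _ = (∫⁻ ω, G ω ^ (q / r) ∂μ) ^ (1 / q) := by
        rw [← ENNReal.rpow_mul, mul_one_div_cancel hp.ne', ENNReal.rpow_one]
end

section
/- Let (Ω₁,μ₁) and (Ω₂,μ₂) be σ-finite measure spaces, let 0 < p₁, p₂ < ∞, and set r = min(p₁,p₂). Then for every n and all measurable functions f₁,…,fₙ : Ω₁ × Ω₂ → ℝ (measurable with respect to the product σ-algebra), ‖(∑_{k≤n} |f_k|^r)^{1/r}‖_{(p₁,p₂)} ≤ (∑_{k≤n} ‖f_k‖_{(p₁,p₂)}^r)^{1/r}, where ‖f‖_{(p₁,p₂)} := (∫_{Ω₁} (∫_{Ω₂} |f(ω₁,ω₂)|^{p₂} dμ₂(ω₂))^{p₁/p₂} dμ₁(ω₁))^{1/p₁} ∈ [0,∞]. -/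
open MeasureTheory ENNReal
open scoped NNReal ENNReal

/-- Two-function Minkowski inequality for the mixed norm on `ℝ≥0∞`-valued functions. -/
lemma mixed_Lp_add_le {Ω₁ Ω₂ : Type*} [MeasurableSpace Ω₁] [MeasurableSpace Ω₂]
    (μ₁ : Measure Ω₁) (μ₂ : Measure Ω₂) [SFinite μ₂]
    {q₁ q₂ : ℝ} (hq₁ : 1 ≤ q₁) (hq₂ : 1 ≤ q₂)
    (g₁ g₂ : Ω₁ × Ω₂ → ℝ≥0∞) (hg₁ : Measurable g₁) (hg₂ : Measurable g₂) :
    (∫⁻ ω₁, (∫⁻ ω₂, (g₁ (ω₁, ω₂) + g₂ (ω₁, ω₂)) ^ q₂ ∂μ₂) ^ (q₁ / q₂) ∂μ₁) ^ (1 / q₁) ≤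
      (∫⁻ ω₁, (∫⁻ ω₂, g₁ (ω₁, ω₂) ^ q₂ ∂μ₂) ^ (q₁ / q₂) ∂μ₁) ^ (1 / q₁) +
      (∫⁻ ω₁, (∫⁻ ω₂, g₂ (ω₁, ω₂) ^ q₂ ∂μ₂) ^ (q₁ / q₂) ∂μ₁) ^ (1 / q₁) := by
  set A₁ : Ω₁ → ℝ≥0∞ := fun ω₁ => (∫⁻ ω₂, g₁ (ω₁, ω₂) ^ q₂ ∂μ₂) ^ (1 / q₂) with hA₁
  set A₂ : Ω₁ → ℝ≥0∞ := fun ω₁ => (∫⁻ ω₂, g₂ (ω₁, ω₂) ^ q₂ ∂μ₂) ^ (1 / q₂) with hA₂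
  have hmA₁ : Measurable A₁ :=
    (Measurable.lintegral_prod_right' (hg₁.pow_const q₂)).pow_const _
  have hmA₂ : Measurable A₂ :=
    (Measurable.lintegral_prod_right' (hg₂.pow_const q₂)).pow_const _
  have hdiv : q₁ / q₂ = 1 / q₂ * q₁ := by ring
  have key : ∀ ω₁, (∫⁻ ω₂, (g₁ (ω₁, ω₂) + g₂ (ω₁, ω₂)) ^ q₂ ∂μ₂) ^ (1 / q₂) ≤
      A₁ ω₁ + A₂ ω₁ := by
    intro ω₁
    exact ENNReal.lintegral_Lp_add_le
      ((hg₁.comp measurable_prodMk_left).aemeasurable)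
      ((hg₂.comp measurable_prodMk_left).aemeasurable) hq₂
  calc (∫⁻ ω₁, (∫⁻ ω₂, (g₁ (ω₁, ω₂) + g₂ (ω₁, ω₂)) ^ q₂ ∂μ₂) ^ (q₁ / q₂) ∂μ₁) ^ (1 / q₁)
      ≤ (∫⁻ ω₁, (A₁ ω₁ + A₂ ω₁) ^ q₁ ∂μ₁) ^ (1 / q₁) := by
        refine ENNReal.rpow_le_rpow (lintegral_mono fun ω₁ => ?_)
          (by positivity)
        rw [hdiv, ENNReal.rpow_mul]
        exact ENNReal.rpow_le_rpow (key ω₁) (by linarith)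
    _ ≤ (∫⁻ ω₁, A₁ ω₁ ^ q₁ ∂μ₁) ^ (1 / q₁) + (∫⁻ ω₁, A₂ ω₁ ^ q₁ ∂μ₁) ^ (1 / q₁) :=
        ENNReal.lintegral_Lp_add_le hmA₁.aemeasurable hmA₂.aemeasurable hq₁
    _ = _ := by
        simp only [hA₁, hA₂, ← ENNReal.rpow_mul, ← hdiv]

/-- Finite-sum Minkowski inequality for the mixed norm on `ℝ≥0∞`-valued functions. -/
lemma mixed_Lp_sum_le {Ω₁ Ω₂ : Type*} [MeasurableSpace Ω₁] [MeasurableSpace Ω₂]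
    (μ₁ : Measure Ω₁) (μ₂ : Measure Ω₂) [SFinite μ₂]
    {q₁ q₂ : ℝ} (hq₁ : 1 ≤ q₁) (hq₂ : 1 ≤ q₂)
    {ι : Type*} (s : Finset ι) (g : ι → Ω₁ × Ω₂ → ℝ≥0∞) (hg : ∀ i, Measurable (g i)) :
    (∫⁻ ω₁, (∫⁻ ω₂, (∑ i ∈ s, g i (ω₁, ω₂)) ^ q₂ ∂μ₂) ^ (q₁ / q₂) ∂μ₁) ^ (1 / q₁) ≤
      ∑ i ∈ s, (∫⁻ ω₁, (∫⁻ ω₂, g i (ω₁, ω₂) ^ q₂ ∂μ₂) ^ (q₁ / q₂) ∂μ₁) ^ (1 / q₁) := by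
  classical
  induction s using Finset.induction_on with
  | empty =>
      simp only [Finset.sum_empty]
      rw [ENNReal.zero_rpow_of_pos (by linarith), lintegral_zero,
        ENNReal.zero_rpow_of_pos (by positivity), lintegral_zero,
        ENNReal.zero_rpow_of_pos (by positivity)]
  | @insert a s ha ih =>
      simp only [Finset.sum_insert ha]
      calc (∫⁻ ω₁, (∫⁻ ω₂, (g a (ω₁, ω₂) + ∑ i ∈ s, g i (ω₁, ω₂)) ^ q₂ ∂μ₂) ^ (q₁ / q₂) ∂μ₁)
              ^ (1 / q₁)
          ≤ (∫⁻ ω₁, (∫⁻ ω₂, g a (ω₁, ω₂) ^ q₂ ∂μ₂) ^ (q₁ / q₂) ∂μ₁) ^ (1 / q₁) +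
            (∫⁻ ω₁, (∫⁻ ω₂, (∑ i ∈ s, g i (ω₁, ω₂)) ^ q₂ ∂μ₂) ^ (q₁ / q₂) ∂μ₁) ^ (1 / q₁) := by
            exact mixed_Lp_add_le μ₁ μ₂ hq₁ hq₂ (g a) (fun z => ∑ i ∈ s, g i z) (hg a)
              (Finset.measurable_sum s fun i _ => hg i)
        _ ≤ _ := add_le_add le_rfl ih

/-- The mixed norm `‖f‖_{(p₁,p₂)} = (∫ (∫ |f(ω₁,ω₂)|^{p₂} dμ₂)^{p₁/p₂} dμ₁)^{1/p₁}`
of a function on a product space, computed in the extended nonnegative reals. -/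
noncomputable def mixedNorm {Ω₁ Ω₂ : Type*} [MeasurableSpace Ω₁] [MeasurableSpace Ω₂]
    (μ₁ : Measure Ω₁) (μ₂ : Measure Ω₂) (p₁ p₂ : ℝ) (f : Ω₁ × Ω₂ → ℝ) : ℝ≥0∞ :=
  (∫⁻ ω₁, (∫⁻ ω₂, ENNReal.ofReal (|f (ω₁, ω₂)| ^ p₂) ∂μ₂) ^ (p₁ / p₂) ∂μ₁) ^ (1 / p₁)

/-- The mixed-norm space `L_{(p₁,p₂)}(μ₁⊗μ₂)` is `min(p₁,p₂)`-convex with constant `1`: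
for `r = min(p₁,p₂)`,
`‖(∑ |f_k|^r)^{1/r}‖_{(p₁,p₂)} ≤ (∑ ‖f_k‖_{(p₁,p₂)}^r)^{1/r}`. -/
theorem mixedNorm_min_convex
    {Ω₁ Ω₂ : Type*} [MeasurableSpace Ω₁] [MeasurableSpace Ω₂]
    (μ₁ : Measure Ω₁) (μ₂ : Measure Ω₂) [SigmaFinite μ₁] [SigmaFinite μ₂]
    (p₁ p₂ : ℝ) (hp₁ : 0 < p₁) (hp₂ : 0 < p₂) (r : ℝ) (hr : r = min p₁ p₂)
    (n : ℕ) (f : Fin n → Ω₁ × Ω₂ → ℝ) (hf : ∀ k, Measurable (f k)) :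
    mixedNorm μ₁ μ₂ p₁ p₂ (fun z => (∑ k, |f k z| ^ r) ^ (1 / r)) ≤
      (∑ k, mixedNorm μ₁ μ₂ p₁ p₂ (f k) ^ r) ^ (1 / r) := by
  have hr0 : 0 < r := hr ▸ lt_min hp₁ hp₂
  have hrne : r ≠ 0 := hr0.ne'
  set q₁ := p₁ / r with hq₁def
  set q₂ := p₂ / r with hq₂def
  have hq₁ : 1 ≤ q₁ := (one_le_div hr0).2 (hr ▸ min_le_left p₁ p₂)
  have hq₂ : 1 ≤ q₂ := (one_le_div hr0).2 (hr ▸ min_le_right p₁ p₂)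
  set g : Fin n → Ω₁ × Ω₂ → ℝ≥0∞ := fun k z => ENNReal.ofReal (|f k z|) ^ r with hgdef
  have hgm : ∀ k, Measurable (g k) := fun k =>
    ((hf k).abs.ennreal_ofReal).pow_const r
  -- rewrite the LHS
  have hL : mixedNorm μ₁ μ₂ p₁ p₂ (fun z => (∑ k, |f k z| ^ r) ^ (1 / r)) =
      ((∫⁻ ω₁, (∫⁻ ω₂, (∑ k, g k (ω₁, ω₂)) ^ q₂ ∂μ₂) ^ (q₁ / q₂) ∂μ₁) ^ (1 / q₁)) ^ (1 / r) := by
    have hinner : ∀ z : Ω₁ × Ω₂,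
        ENNReal.ofReal (|(∑ k, |f k z| ^ r) ^ (1 / r)| ^ p₂) = (∑ k, g k z) ^ q₂ := by
      intro z
      have hS : (0:ℝ) ≤ ∑ k, |f k z| ^ r :=
        Finset.sum_nonneg fun k _ => Real.rpow_nonneg (abs_nonneg _) r
      rw [abs_of_nonneg (Real.rpow_nonneg hS _)]
      rw [show ((∑ k, |f k z| ^ r) ^ (1 / r)) ^ p₂ = (∑ k, |f k z| ^ r) ^ (1 / r * p₂) by
        rw [Real.rpow_mul hS]]
      rw [show (1 / r) * p₂ = q₂ by rw [hq₂def]; ring]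
      rw [← ENNReal.ofReal_rpow_of_nonneg hS (by positivity)]
      congr 1
      rw [ENNReal.ofReal_sum_of_nonneg fun k _ => Real.rpow_nonneg (abs_nonneg _) r]
      refine Finset.sum_congr rfl fun k _ => ?_
      simp only [hgdef]
      exact (ENNReal.ofReal_rpow_of_nonneg (abs_nonneg _) hr0.le).symm
    rw [mixedNorm]
    simp only [hinner]
    rw [show p₁ / p₂ = q₁ / q₂ by rw [hq₁def, hq₂def]; field_simp]
    rw [← ENNReal.rpow_mul, show (1 / p₁ : ℝ) = 1 / q₁ * (1 / r) by
      rw [hq₁def]; field_simp]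
  -- rewrite each RHS term
  have hR : ∀ k, mixedNorm μ₁ μ₂ p₁ p₂ (f k) ^ r =
      (∫⁻ ω₁, (∫⁻ ω₂, g k (ω₁, ω₂) ^ q₂ ∂μ₂) ^ (q₁ / q₂) ∂μ₁) ^ (1 / q₁) := by
    intro k
    have hinner : ∀ z : Ω₁ × Ω₂,
        ENNReal.ofReal (|f k z| ^ p₂) = g k z ^ q₂ := by
      intro z
      simp only [hgdef, ← ENNReal.rpow_mul]
      rw [show r * q₂ = p₂ by rw [hq₂def]; field_simp]
      exact (ENNReal.ofReal_rpow_of_nonneg (abs_nonneg _) hp₂.le).symm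
    rw [mixedNorm]
    simp only [hinner]
    rw [show p₁ / p₂ = q₁ / q₂ by rw [hq₁def, hq₂def]; field_simp]
    rw [← ENNReal.rpow_mul, show (1 / p₁ : ℝ) * r = 1 / q₁ by rw [hq₁def]; field_simp]
  rw [hL]
  simp only [hR]
  exact ENNReal.rpow_le_rpow
    (mixed_Lp_sum_le μ₁ μ₂ hq₁ hq₂ Finset.univ g hgm) (by positivity)
end

section
/- Let (Ω,μ) be a σ-finite measure space, let 1 < r < ∞ with conjugate exponent r', and let 1 ≤ a < ∞. Let u : L^{ar}(μ) × L^{ar'}(μ) → ℝ be a bounded bilinear form that is positive, i.e., u(x,y) ≥ 0 whenever x ≥ 0 a.e. and y ≥ 0 a.e. Then for every n and all x₁,…,xₙ ∈ L^{ar}(μ) and y₁,…,yₙ ∈ L^{ar'}(μ), ∑_{k≤n} |u(x_k,y_k)| ≤ ‖u‖ · ‖(∑_{k≤n} |x_k|^r)^{1/r}‖_{L^{ar}(μ)} · ‖(∑_{k≤n} |y_k|^{r'})^{1/r'}‖_{L^{ar'}(μ)}, where ‖u‖ := sup{|u(x,y)| : ‖x‖_{L^{ar}(μ)} ≤ 1,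 ‖y‖_{L^{ar'}(μ)} ≤ 1}. -/
open MeasureTheory ENNReal
open scoped NNReal ENNReal

namespace PosBilinAux

lemma lr_le_l1 {n : ℕ} {r : ℝ} (hr : 1 ≤ r) (a : Fin n → ℝ) (ha : ∀ k, 0 ≤ a k) :
    (∑ k, a k ^ r) ^ (1 / r) ≤ ∑ k, a k := by
  have hr0 : 0 < r := lt_of_lt_of_le one_pos hr
  set S := ∑ k, a k with hS
  have hS0 : 0 ≤ S := Finset.sum_nonneg fun k _ => ha k
  have key : ∑ k, a k ^ r ≤ S ^ r := by
    rcases eq_or_lt_of_le hS0 with h0 | hSpos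
    · have hz : ∀ k, a k = 0 := by
        intro k
        have h1 : a k ≤ S := Finset.single_le_sum (fun k _ => ha k) (Finset.mem_univ k)
        have := h0.symm
        nlinarith [ha k]
      have : ∑ k, a k ^ r = 0 := by
        refine Finset.sum_eq_zero fun k _ => ?_
        rw [hz k, Real.zero_rpow hr0.ne']
      rw [this, ← h0, Real.zero_rpow hr0.ne']
    · have hterm : ∀ k : Fin n, a k ^ r ≤ a k * S ^ (r - 1) := by
        intro k
        rcases eq_or_lt_of_le (ha k) with h0k | hpos
        · rw [← h0k, Real.zero_rpow hr0.ne', zero_mul]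
        · have h1 : a k ^ r = a k * a k ^ (r - 1) := by
            nth_rewrite 2 [show a k = a k ^ (1:ℝ) by rw [Real.rpow_one]]
            rw [← Real.rpow_add hpos]; ring_nf
          rw [h1]
          refine mul_le_mul_of_nonneg_left ?_ (ha k)
          exact Real.rpow_le_rpow (ha k)
            (Finset.single_le_sum (fun k _ => ha k) (Finset.mem_univ k)) (by linarith)
      calc ∑ k, a k ^ r ≤ ∑ k, a k * S ^ (r - 1) := Finset.sum_le_sum fun k _ => hterm k
        _ = S * S ^ (r - 1) := by rw [← Finset.sum_mul]
        _ = S ^ r := by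
            nth_rewrite 1 [show S = S ^ (1:ℝ) by rw [Real.rpow_one]]
            rw [← Real.rpow_add hSpos]; ring_nf
  calc (∑ k, a k ^ r) ^ (1 / r) ≤ (S ^ r) ^ (1 / r) :=
        Real.rpow_le_rpow (Finset.sum_nonneg fun k _ => Real.rpow_nonneg (ha k) r) key
          (by positivity)
    _ = S := by rw [← Real.rpow_mul hS0, mul_one_div, div_self hr0.ne', Real.rpow_one]


variable {Ω : Type*} [MeasurableSpace Ω] {μ : Measure Ω}

lemma aesm_lr {n : ℕ} {r : ℝ} (hr : 0 < r) {f : Fin n → Ω → ℝ}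
    (hf : ∀ k, AEStronglyMeasurable (f k) μ) :
    AEStronglyMeasurable (fun ω => (∑ k, |f k ω| ^ r) ^ (1 / r)) μ := by
  have h1 : ∀ k : Fin n, AEStronglyMeasurable (fun ω => |f k ω| ^ r) μ := fun k =>
    ((Real.continuous_rpow_const hr.le).comp continuous_abs).comp_aestronglyMeasurable (hf k)
  have h2 : AEStronglyMeasurable (fun ω => ∑ k, |f k ω| ^ r) μ :=
    Finset.aestronglyMeasurable_fun_sum Finset.univ fun k _ => h1 k
  exact (Real.continuous_rpow_const (by positivity)).comp_aestronglyMeasurable h2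

lemma memℒp_lr {n : ℕ} {r : ℝ} (hr : 1 ≤ r) {pp : ℝ≥0∞} {f : Fin n → Ω → ℝ}
    (hf : ∀ k, MemLp (f k) pp μ) :
    MemLp (fun ω => (∑ k, |f k ω| ^ r) ^ (1 / r)) pp μ := by
  have hg : MemLp (fun ω => ∑ k, |f k ω|) pp μ :=
    memLp_finsetSum (f := fun k ω => |f k ω|) Finset.univ
      (fun k _ => by simpa [Real.norm_eq_abs] using (hf k).norm)
  refine hg.of_le (aesm_lr (lt_of_lt_of_le one_pos hr) fun k => (hf k).1) ?_
  refine Filter.Eventually.of_forall fun ω => ?_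
  have h1 : (0:ℝ) ≤ (∑ k, |f k ω| ^ r) ^ (1 / r) :=
    Real.rpow_nonneg (Finset.sum_nonneg fun k _ => Real.rpow_nonneg (abs_nonneg _) r) _
  have h2 : (0:ℝ) ≤ ∑ k, |f k ω| := Finset.sum_nonneg fun k _ => abs_nonneg _
  rw [Real.norm_eq_abs, Real.norm_eq_abs, abs_of_nonneg h1, abs_of_nonneg h2]
  exact lr_le_l1 hr _ fun k => abs_nonneg _


lemma coeFn_finset_sum {E' : Type*} [NormedAddCommGroup E'] {pp : ℝ≥0∞} {ι : Type*}
    (S : Finset ι) (f : ι → Lp E' pp μ) :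
    ⇑(∑ i ∈ S, f i) =ᵐ[μ] fun ω => ∑ i ∈ S, f i ω := by
  classical
  induction S using Finset.induction with
  | empty =>
    simp only [Finset.sum_empty]
    exact Lp.coeFn_zero E' pp μ
  | @insert a S ha ih =>
    rw [Finset.sum_insert ha]
    filter_upwards [Lp.coeFn_add (f a) (∑ i ∈ S, f i), ih] with ω h1 h2
    simp only [h1, Pi.add_apply, h2, Finset.sum_insert ha]

set_option maxHeartbeats 1000000 in
lemma core {p q : ℝ≥0∞}
    (hp0 : p ≠ 0) (hp : p ≠ ∞) (hq0 : q ≠ 0) (hq : q ≠ ∞)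
    (u : Lp ℝ p μ →ₗ[ℝ] Lp ℝ q μ →ₗ[ℝ] ℝ)
    (M : ℝ) (hM : ∀ x y, |u x y| ≤ M * ‖x‖ * ‖y‖)
    (hpos : ∀ x y, (∀ᵐ ω ∂μ, 0 ≤ x ω) → (∀ᵐ ω ∂μ, 0 ≤ y ω) → 0 ≤ u x y)
    {r r' : ℝ} (hrr : r.HolderConjugate r')
    {n : ℕ} (s t : Fin n → SimpleFunc Ω ℝ)
    (hs : ∀ k, MemLp (s k) p μ) (ht : ∀ k, MemLp (t k) q μ)
    (hfS : MemLp (fun ω => (∑ k, |s k ω| ^ r) ^ (1 / r)) p μ)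
    (hfT : MemLp (fun ω => (∑ k, |t k ω| ^ r') ^ (1 / r')) q μ) :
    ∑ k, u ((hs k).toLp _) ((ht k).toLp _) ≤ M * ‖hfS.toLp _‖ * ‖hfT.toLp _‖ := by
  classical
  set F : Ω → (Fin n → ℝ) × (Fin n → ℝ) :=
    fun ω => (fun k => s k ω, fun k => t k ω) with hF
  set E : (Fin n → ℝ) × (Fin n → ℝ) → Set Ω := fun v => F ⁻¹' {v} with hE
  have hωE : ∀ ω v, ω ∈ E v ↔ F ω = v := by
    intro ω v
    simp [hE]
  have hEmeas : ∀ v, MeasurableSet (E v) := by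
    intro v
    have hrw : E v = (⋂ k, s k ⁻¹' {v.1 k}) ∩ ⋂ k, t k ⁻¹' {v.2 k} := by
      ext ω
      simp only [hωE, Set.mem_inter_iff, Set.mem_iInter, Set.mem_preimage,
        Set.mem_singleton_iff, hF, Prod.ext_iff, funext_iff]
    rw [hrw]
    exact (MeasurableSet.iInter fun k => (s k).measurableSet_fiber _).inter
      (MeasurableSet.iInter fun k => (t k).measurableSet_fiber _)
  set J : Finset ((Fin n → ℝ) × (Fin n → ℝ)) :=
    ((Fintype.piFinset fun k => (s k).range) ×ˢ Fintype.piFinset fun k => (t k).range).filter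
      (fun v => v ≠ 0) with hJ
  have hFJ : ∀ ω, F ω ∉ J → F ω = 0 := by
    intro ω h
    by_contra h0
    apply h
    rw [hJ, Finset.mem_filter]
    refine ⟨Finset.mem_product.2 ⟨?_, ?_⟩, h0⟩
    · exact Fintype.mem_piFinset.2 fun k => SimpleFunc.mem_range_self _ ω
    · exact Fintype.mem_piFinset.2 fun k => SimpleFunc.mem_range_self _ ω
  have hμE : ∀ v ∈ J, μ (E v) ≠ ∞ := by
    intro v hv
    rw [hJ, Finset.mem_filter] at hv
    have hv0 : v ≠ 0 := hv.2
    have : (∃ k, v.1 k ≠ 0) ∨ ∃ k, v.2 k ≠ 0 := by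
      by_contra hcon
      push_neg at hcon
      exact hv0 (Prod.ext (funext hcon.1) (funext hcon.2))
    rcases this with ⟨k, hk⟩ | ⟨k, hk⟩
    · have hsub : E v ⊆ s k ⁻¹' {v.1 k} := by
        intro ω hω
        rw [hωE] at hω
        simp only [Set.mem_preimage, Set.mem_singleton_iff, ← hω, hF]
      exact ((measure_mono hsub).trans_lt
        (SimpleFunc.measure_preimage_lt_top_of_memLp hp0 hp (s k) (hs k) _ hk)).ne
    · have hsub : E v ⊆ t k ⁻¹' {v.2 k} := by
        intro ω hω
        rw [hωE] at hω
        simp only [Set.mem_preimage, Set.mem_singleton_iff, ← hω, hF]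
      exact ((measure_mono hsub).trans_lt
        (SimpleFunc.measure_preimage_lt_top_of_memLp hq0 hq (t k) (ht k) _ hk)).ne
  -- indicator elements
  set I : (pp : ℝ≥0∞) → (Fin n → ℝ) × (Fin n → ℝ) → Lp ℝ pp μ := fun pp v =>
    if h : μ (E v) = ∞ then 0 else indicatorConstLp pp (hEmeas v) h 1 with hI
  have hIcoe : ∀ (pp : ℝ≥0∞) v, v ∈ J →
      ⇑(I pp v) =ᵐ[μ] fun ω => (E v).indicator (fun _ => (1:ℝ)) ω := by
    intro pp v hv
    rw [hI]
    simp only [hμE v hv, dite_false]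
    exact indicatorConstLp_coeFn
  have hIpos : ∀ (pp : ℝ≥0∞) v, ∀ᵐ ω ∂μ, 0 ≤ I pp v ω := by
    intro pp v
    rw [hI]
    by_cases h : μ (E v) = ∞
    · simp only [h, dite_true]
      filter_upwards [Lp.coeFn_zero (E := ℝ) (p := pp) (μ := μ)] with ω hω
      rw [hω]
      simp
    · simp only [h, dite_false]
      filter_upwards [indicatorConstLp_coeFn (p := pp) (hs := hEmeas v) (hμs := h) (c := (1:ℝ))]
        with ω hω
      rw [hω]
      exact Set.indicator_nonneg (fun _ _ => zero_le_one) _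
  -- decomposition of functions constant on the fibers of F
  have decomp : ∀ (pp : ℝ≥0∞) (g : Ω → ℝ) (c : (Fin n → ℝ) × (Fin n → ℝ) → ℝ)
      (_ : ∀ ω, g ω = c (F ω)) (_ : c 0 = 0) (hg : MemLp g pp μ),
      hg.toLp g = ∑ v ∈ J, c v • I pp v := by
    intro pp g c hgc hc0 hg
    refine Lp.ext ?_
    have hsum : ⇑(∑ v ∈ J, c v • I pp v) =ᵐ[μ]
        fun ω => ∑ v ∈ J, c v * (E v).indicator (fun _ => (1:ℝ)) ω := by
      refine (coeFn_finset_sum J fun v => c v • I pp v).trans ?_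
      have hv : ∀ v ∈ J, ⇑(c v • I pp v) =ᵐ[μ]
          fun ω => c v * (E v).indicator (fun _ => (1:ℝ)) ω := by
        intro v hv
        filter_upwards [Lp.coeFn_smul (c v) (I pp v), hIcoe pp v hv] with ω h1 h2
        simp [h1, h2]
      filter_upwards [(ae_ball_iff J.countable_toSet).2 hv] with ω hω
      exact Finset.sum_congr rfl fun v hv => hω v hv
    have hpt : ∀ ω, g ω = ∑ v ∈ J, c v * (E v).indicator (fun _ => (1:ℝ)) ω := by
      intro ω
      have : ∀ v ∈ J, c v * (E v).indicator (fun _ => (1:ℝ)) ω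
          = if v = F ω then c v else 0 := by
        intro v _
        rw [Set.indicator_apply]
        by_cases hmem : ω ∈ E v
        · have h1 : v = F ω := ((hωE ω v).1 hmem).symm
          rw [if_pos hmem, if_pos h1, mul_one]
        · have h1 : ¬ v = F ω := fun hc => hmem ((hωE ω v).2 hc.symm)
          rw [if_neg hmem, if_neg h1, mul_zero]
      rw [Finset.sum_congr rfl this, Finset.sum_ite_eq' J (F ω) c]
      by_cases hJmem : F ω ∈ J
      · rw [if_pos hJmem, hgc ω]
      · rw [if_neg hJmem, hgc ω, hFJ ω hJmem, hc0]
    exact ((MemLp.coeFn_toLp hg).trans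
      (Filter.Eventually.of_forall hpt)).trans hsum.symm
  -- the four decompositions
  have hds : ∀ k, (hs k).toLp _ = ∑ v ∈ J, (v.1 k) • I p v := fun k =>
    decomp p (s k) (fun v => v.1 k) (fun ω => rfl) rfl (hs k)
  have hdt : ∀ k, (ht k).toLp _ = ∑ v ∈ J, (v.2 k) • I q v := fun k =>
    decomp q (t k) (fun v => v.2 k) (fun ω => rfl) rfl (ht k)
  have hc0S : (∑ k : Fin n, |((0 : (Fin n → ℝ) × (Fin n → ℝ))).1 k| ^ r) ^ (1 / r) = 0 := by
    have hz : ∀ k : Fin n, |((0 : (Fin n → ℝ) × (Fin n → ℝ))).1 k| ^ r = 0 := fun k => by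
      simp [Real.zero_rpow hrr.ne_zero]
    rw [Finset.sum_congr rfl fun k _ => hz k, Finset.sum_const_zero,
      Real.zero_rpow (one_div_ne_zero hrr.ne_zero)]
  have hc0T : (∑ k : Fin n, |((0 : (Fin n → ℝ) × (Fin n → ℝ))).2 k| ^ r') ^ (1 / r') = 0 := by
    have hz : ∀ k : Fin n, |((0 : (Fin n → ℝ) × (Fin n → ℝ))).2 k| ^ r' = 0 := fun k => by
      simp [Real.zero_rpow hrr.symm.ne_zero]
    rw [Finset.sum_congr rfl fun k _ => hz k, Finset.sum_const_zero,
      Real.zero_rpow (one_div_ne_zero hrr.symm.ne_zero)]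
  have hdS : hfS.toLp _ = ∑ v ∈ J, ((∑ k, |v.1 k| ^ r) ^ (1 / r)) • I p v :=
    decomp p _ (fun v => (∑ k, |v.1 k| ^ r) ^ (1 / r)) (fun ω => rfl) hc0S hfS
  have hdT : hfT.toLp _ = ∑ v ∈ J, ((∑ k, |v.2 k| ^ r') ^ (1 / r')) • I q v :=
    decomp q _ (fun v => (∑ k, |v.2 k| ^ r') ^ (1 / r')) (fun ω => rfl) hc0T hfT
  -- bilinear expansion
  have expand : ∀ (xv yv : (Fin n → ℝ) × (Fin n → ℝ) → ℝ),
      u (∑ v ∈ J, xv v • I p v) (∑ w ∈ J, yv w • I q w)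
        = ∑ v ∈ J, ∑ w ∈ J, (xv v * yv w) * u (I p v) (I q w) := by
    intro xv yv
    have h1 : u (∑ v ∈ J, xv v • I p v) = ∑ v ∈ J, xv v • u (I p v) := by
      rw [map_sum]
      exact Finset.sum_congr rfl fun v _ => by rw [_root_.map_smul]
    rw [h1, LinearMap.sum_apply]
    refine Finset.sum_congr rfl fun v _ => ?_
    rw [LinearMap.smul_apply, map_sum, smul_eq_mul, Finset.mul_sum]
    refine Finset.sum_congr rfl fun w _ => ?_
    rw [_root_.map_smul, smul_eq_mul]
    ring
  have hUpos : ∀ v ∈ J, ∀ w ∈ J, 0 ≤ u (I p v) (I q w) := fun v _ w _ =>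
    hpos _ _ (hIpos p v) (hIpos q w)
  calc ∑ k, u ((hs k).toLp _) ((ht k).toLp _)
      = ∑ k, ∑ v ∈ J, ∑ w ∈ J, (v.1 k * w.2 k) * u (I p v) (I q w) := by
        refine Finset.sum_congr rfl fun k _ => ?_
        rw [hds k, hdt k, expand]
    _ = ∑ v ∈ J, ∑ w ∈ J, (∑ k, v.1 k * w.2 k) * u (I p v) (I q w) := by
        rw [Finset.sum_comm]
        refine Finset.sum_congr rfl fun v _ => ?_
        rw [Finset.sum_comm]
        refine Finset.sum_congr rfl fun w _ => ?_
        rw [Finset.sum_mul]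
    _ ≤ ∑ v ∈ J, ∑ w ∈ J,
        (((∑ k, |v.1 k| ^ r) ^ (1 / r)) * ((∑ k, |w.2 k| ^ r') ^ (1 / r')))
          * u (I p v) (I q w) := by
        refine Finset.sum_le_sum fun v hv => Finset.sum_le_sum fun w hw => ?_
        refine mul_le_mul_of_nonneg_right ?_ (hUpos v hv w hw)
        exact Real.inner_le_Lp_mul_Lq (s := Finset.univ) (f := v.1) (g := w.2) hrr
    _ = u (hfS.toLp _) (hfT.toLp _) := by
        rw [hdS, hdT, expand]
    _ ≤ M * ‖hfS.toLp _‖ * ‖hfT.toLp _‖ := (le_abs_self _).trans (hM _ _)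

set_option maxHeartbeats 1000000 in
lemma RL {p q : ℝ≥0∞}
    (hp1 : 1 ≤ p) (hp : p ≠ ∞) (hq1 : 1 ≤ q) (hq : q ≠ ∞)
    (u : Lp ℝ p μ →ₗ[ℝ] Lp ℝ q μ →ₗ[ℝ] ℝ)
    (M : ℝ) (hM0 : 0 ≤ M) (hM : ∀ x y, |u x y| ≤ M * ‖x‖ * ‖y‖)
    (hpos : ∀ x y, (∀ᵐ ω ∂μ, 0 ≤ x ω) → (∀ᵐ ω ∂μ, 0 ≤ y ω) → 0 ≤ u x y)
    {r r' : ℝ} (hrr : r.HolderConjugate r')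
    {n : ℕ} (x : Fin n → Lp ℝ p μ) (y : Fin n → Lp ℝ q μ) :
    ∑ k, u (x k) (y k) ≤
      M * (eLpNorm (fun ω => (∑ k, |x k ω| ^ r) ^ (1 / r)) p μ).toReal
        * (eLpNorm (fun ω => (∑ k, |y k ω| ^ r') ^ (1 / r')) q μ).toReal := by
  classical
  haveI : Fact (1 ≤ p) := ⟨hp1⟩
  haveI : Fact (1 ≤ q) := ⟨hq1⟩
  have hp0 : p ≠ 0 := (lt_of_lt_of_le zero_lt_one hp1).ne'
  have hq0 : q ≠ 0 := (lt_of_lt_of_le zero_lt_one hq1).ne'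
  set fX : Ω → ℝ := fun ω => (∑ k, |x k ω| ^ r) ^ (1 / r) with hfXdef
  set fY : Ω → ℝ := fun ω => (∑ k, |y k ω| ^ r') ^ (1 / r') with hfYdef
  have hmX : MemLp fX p μ := memℒp_lr hrr.lt.le fun k => Lp.memLp (x k)
  have hmY : MemLp fY q μ := memℒp_lr hrr.symm.lt.le fun k => Lp.memLp (y k)
  set NX := (eLpNorm fX p μ).toReal with hNX
  set NY := (eLpNorm fY q μ).toReal with hNY
  set C := ∑ k, (‖y k‖ + ‖x k‖) with hC
  have claim : ∀ ε : ℝ, 0 < ε →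
      ∑ k, u (x k) (y k) ≤
        M * (NX + n * ε) * (NY + n * ε) + M * ε * (C + n * ε) := by
    intro ε hε
    have hε0 : ENNReal.ofReal ε ≠ 0 := by
      simp [ENNReal.ofReal_eq_zero, not_le, hε]
    choose s hsx hs using fun k => (Lp.memLp (x k)).exists_simpleFunc_eLpNorm_sub_lt hp hε0
    choose t hty ht using fun k => (Lp.memLp (y k)).exists_simpleFunc_eLpNorm_sub_lt hq hε0
    set xs : Fin n → Lp ℝ p μ := fun k => (hs k).toLp _ with hxs
    set ys : Fin n → Lp ℝ q μ := fun k => (ht k).toLp _ with hys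
    have hxd : ∀ k, ‖x k - xs k‖ ≤ ε := by
      intro k
      rw [Lp.norm_def]
      refine ENNReal.toReal_le_of_le_ofReal hε.le ?_
      have hco : ⇑(x k - xs k) =ᵐ[μ] (⇑(x k) - ⇑(s k)) := by
        filter_upwards [Lp.coeFn_sub (x k) (xs k), MemLp.coeFn_toLp (hs k)] with ω h1 h2
        rw [h1, Pi.sub_apply]
        simp only [hxs, h2, Pi.sub_apply]
      rw [eLpNorm_congr_ae hco]
      exact (hsx k).le
    have hyd : ∀ k, ‖y k - ys k‖ ≤ ε := by
      intro k
      rw [Lp.norm_def]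
      refine ENNReal.toReal_le_of_le_ofReal hε.le ?_
      have hco : ⇑(y k - ys k) =ᵐ[μ] (⇑(y k) - ⇑(t k)) := by
        filter_upwards [Lp.coeFn_sub (y k) (ys k), MemLp.coeFn_toLp (ht k)] with ω h1 h2
        rw [h1, Pi.sub_apply]
        simp only [hys, h2, Pi.sub_apply]
      rw [eLpNorm_congr_ae hco]
      exact (hty k).le
    have hxsn : ∀ k, ‖xs k‖ ≤ ‖x k‖ + ε := by
      intro k
      have h1 : ‖xs k‖ ≤ ‖x k‖ + ‖x k - xs k‖ := by
        have := norm_sub_le (x k) (x k - xs k)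
        simpa using this
      linarith [hxd k]
    have hfS : MemLp (fun ω => (∑ k, |s k ω| ^ r) ^ (1 / r)) p μ :=
      memℒp_lr hrr.lt.le hs
    have hfT : MemLp (fun ω => (∑ k, |t k ω| ^ r') ^ (1 / r')) q μ :=
      memℒp_lr hrr.symm.lt.le ht
    -- eLpNorm comparison for the s-family
    have hSle : (eLpNorm (fun ω => (∑ k, |s k ω| ^ r) ^ (1 / r)) p μ).toReal ≤ NX + n * ε := by
      have hpt : ∀ ω, (∑ k, |s k ω| ^ r) ^ (1 / r) ≤ fX ω + ∑ k, |s k ω - x k ω| := by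
        intro ω
        have h1 : (∑ k, |s k ω| ^ r) ^ (1 / r)
            ≤ (∑ k, |x k ω| ^ r) ^ (1 / r) + (∑ k, |s k ω - x k ω| ^ r) ^ (1 / r) := by
          have h0 := Real.Lp_add_le (s := Finset.univ) (f := fun k => x k ω)
            (g := fun k => s k ω - x k ω) hrr.lt.le
          simpa using h0
        have h2 : (∑ k, |s k ω - x k ω| ^ r) ^ (1 / r) ≤ ∑ k, |s k ω - x k ω| := by
          have := lr_le_l1 hrr.lt.le (fun k => |s k ω - x k ω|) fun k => abs_nonneg _
          simpa using this
        calc (∑ k, |s k ω| ^ r) ^ (1 / r)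
            ≤ (∑ k, |x k ω| ^ r) ^ (1 / r) + (∑ k, |s k ω - x k ω| ^ r) ^ (1 / r) := h1
          _ ≤ fX ω + ∑ k, |s k ω - x k ω| := by
              rw [hfXdef]
              exact add_le_add_right h2 _
      have haesd : ∀ k : Fin n, AEStronglyMeasurable (fun ω => |s k ω - x k ω|) μ :=
        fun k => continuous_abs.comp_aestronglyMeasurable
          ((s k).aestronglyMeasurable.sub (Lp.aestronglyMeasurable (x k)))
      have haes : AEStronglyMeasurable (fun ω => ∑ k, |s k ω - x k ω|) μ :=
        Finset.aestronglyMeasurable_fun_sum Finset.univ fun k _ => haesd k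
      have hmono : eLpNorm (fun ω => (∑ k, |s k ω| ^ r) ^ (1 / r)) p μ
          ≤ eLpNorm (fun ω => fX ω + ∑ k, |s k ω - x k ω|) p μ := by
        refine eLpNorm_mono_ae (Filter.Eventually.of_forall fun ω => ?_)
        have hn1 : (0:ℝ) ≤ (∑ k, |s k ω| ^ r) ^ (1 / r) :=
          Real.rpow_nonneg (Finset.sum_nonneg fun k _ => Real.rpow_nonneg (abs_nonneg _) r) _
        have hn2 : (0:ℝ) ≤ fX ω + ∑ k, |s k ω - x k ω| := by
          have : (0:ℝ) ≤ fX ω :=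
            Real.rpow_nonneg (Finset.sum_nonneg fun k _ => Real.rpow_nonneg (abs_nonneg _) r) _
          have h2 : (0:ℝ) ≤ ∑ k, |s k ω - x k ω| :=
            Finset.sum_nonneg fun k _ => abs_nonneg _
          linarith
        rw [Real.norm_eq_abs, Real.norm_eq_abs, abs_of_nonneg hn1, abs_of_nonneg hn2]
        exact hpt ω
      have htri : eLpNorm (fun ω => fX ω + ∑ k, |s k ω - x k ω|) p μ
          ≤ eLpNorm fX p μ + eLpNorm (fun ω => ∑ k, |s k ω - x k ω|) p μ :=
        eLpNorm_add_le hmX.1 haes hp1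
      have hsum : eLpNorm (fun ω => ∑ k, |s k ω - x k ω|) p μ ≤ ENNReal.ofReal (n * ε) := by
        have hfn : (fun ω => ∑ k, |s k ω - x k ω|)
            = ∑ k : Fin n, fun ω => |s k ω - x k ω| := by
          funext ω
          simp
        rw [hfn]
        refine (eLpNorm_sum_le (fun k _ => haesd k) hp1).trans ?_
        have hone : ∀ k : Fin n, eLpNorm (fun ω => |s k ω - x k ω|) p μ
            ≤ ENNReal.ofReal ε := by
          intro k
          have heq : eLpNorm (fun ω => |s k ω - x k ω|) p μ
              = eLpNorm (⇑(s k) - ⇑(x k)) p μ := by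
            have h0 : (fun ω => |s k ω - x k ω|) = fun ω => ‖(⇑(s k) - ⇑(x k)) ω‖ := by
              funext ω
              simp [Real.norm_eq_abs]
            rw [h0, eLpNorm_norm]
          rw [heq, eLpNorm_sub_comm]
          exact (hsx k).le
        calc ∑ k : Fin n, eLpNorm (fun ω => |s k ω - x k ω|) p μ
            ≤ ∑ _k : Fin n, ENNReal.ofReal ε := Finset.sum_le_sum fun k _ => hone k
          _ = ENNReal.ofReal (n * ε) := by
              rw [Finset.sum_const, Finset.card_univ, Fintype.card_fin, nsmul_eq_mul,
                ENNReal.ofReal_mul (by positivity), ENNReal.ofReal_natCast]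
      have hfin : eLpNorm fX p μ ≠ ∞ := hmX.2.ne
      have hle2 : eLpNorm (fun ω => (∑ k, |s k ω| ^ r) ^ (1 / r)) p μ
          ≤ eLpNorm fX p μ + ENNReal.ofReal (n * ε) :=
        hmono.trans (htri.trans (add_le_add_right hsum _))
      calc (eLpNorm (fun ω => (∑ k, |s k ω| ^ r) ^ (1 / r)) p μ).toReal
          ≤ (eLpNorm fX p μ + ENNReal.ofReal (n * ε)).toReal :=
            ENNReal.toReal_mono (ENNReal.add_ne_top.2 ⟨hfin, ENNReal.ofReal_ne_top⟩) hle2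
        _ = NX + n * ε := by
            rw [ENNReal.toReal_add hfin ENNReal.ofReal_ne_top,
              ENNReal.toReal_ofReal (by positivity)]
    -- eLpNorm comparison for the t-family
    have hTle : (eLpNorm (fun ω => (∑ k, |t k ω| ^ r') ^ (1 / r')) q μ).toReal ≤ NY + n * ε := by
      have hpt : ∀ ω, (∑ k, |t k ω| ^ r') ^ (1 / r') ≤ fY ω + ∑ k, |t k ω - y k ω| := by
        intro ω
        have h1 : (∑ k, |t k ω| ^ r') ^ (1 / r')
            ≤ (∑ k, |y k ω| ^ r') ^ (1 / r') + (∑ k, |t k ω - y k ω| ^ r') ^ (1 / r') := by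
          have h0 := Real.Lp_add_le (s := Finset.univ) (f := fun k => y k ω)
            (g := fun k => t k ω - y k ω) hrr.symm.lt.le
          simpa using h0
        have h2 : (∑ k, |t k ω - y k ω| ^ r') ^ (1 / r') ≤ ∑ k, |t k ω - y k ω| := by
          have := lr_le_l1 hrr.symm.lt.le (fun k => |t k ω - y k ω|) fun k => abs_nonneg _
          simpa using this
        calc (∑ k, |t k ω| ^ r') ^ (1 / r')
            ≤ (∑ k, |y k ω| ^ r') ^ (1 / r') + (∑ k, |t k ω - y k ω| ^ r') ^ (1 / r') := h1
          _ ≤ fY ω + ∑ k, |t k ω - y k ω| := by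
              rw [hfYdef]
              exact add_le_add_right h2 _
      have haesd : ∀ k : Fin n, AEStronglyMeasurable (fun ω => |t k ω - y k ω|) μ :=
        fun k => continuous_abs.comp_aestronglyMeasurable
          ((t k).aestronglyMeasurable.sub (Lp.aestronglyMeasurable (y k)))
      have haes : AEStronglyMeasurable (fun ω => ∑ k, |t k ω - y k ω|) μ :=
        Finset.aestronglyMeasurable_fun_sum Finset.univ fun k _ => haesd k
      have hmono : eLpNorm (fun ω => (∑ k, |t k ω| ^ r') ^ (1 / r')) q μ
          ≤ eLpNorm (fun ω => fY ω + ∑ k, |t k ω - y k ω|) q μ := by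
        refine eLpNorm_mono_ae (Filter.Eventually.of_forall fun ω => ?_)
        have hn1 : (0:ℝ) ≤ (∑ k, |t k ω| ^ r') ^ (1 / r') :=
          Real.rpow_nonneg (Finset.sum_nonneg fun k _ => Real.rpow_nonneg (abs_nonneg _) r') _
        have hn2 : (0:ℝ) ≤ fY ω + ∑ k, |t k ω - y k ω| := by
          have : (0:ℝ) ≤ fY ω :=
            Real.rpow_nonneg (Finset.sum_nonneg fun k _ => Real.rpow_nonneg (abs_nonneg _) r') _
          have h2 : (0:ℝ) ≤ ∑ k, |t k ω - y k ω| :=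
            Finset.sum_nonneg fun k _ => abs_nonneg _
          linarith
        rw [Real.norm_eq_abs, Real.norm_eq_abs, abs_of_nonneg hn1, abs_of_nonneg hn2]
        exact hpt ω
      have htri : eLpNorm (fun ω => fY ω + ∑ k, |t k ω - y k ω|) q μ
          ≤ eLpNorm fY q μ + eLpNorm (fun ω => ∑ k, |t k ω - y k ω|) q μ :=
        eLpNorm_add_le hmY.1 haes hq1
      have hsum : eLpNorm (fun ω => ∑ k, |t k ω - y k ω|) q μ ≤ ENNReal.ofReal (n * ε) := by
        have hfn : (fun ω => ∑ k, |t k ω - y k ω|)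
            = ∑ k : Fin n, fun ω => |t k ω - y k ω| := by
          funext ω
          simp
        rw [hfn]
        refine (eLpNorm_sum_le (fun k _ => haesd k) hq1).trans ?_
        have hone : ∀ k : Fin n, eLpNorm (fun ω => |t k ω - y k ω|) q μ
            ≤ ENNReal.ofReal ε := by
          intro k
          have heq : eLpNorm (fun ω => |t k ω - y k ω|) q μ
              = eLpNorm (⇑(t k) - ⇑(y k)) q μ := by
            have h0 : (fun ω => |t k ω - y k ω|) = fun ω => ‖(⇑(t k) - ⇑(y k)) ω‖ := by
              funext ω
              simp [Real.norm_eq_abs]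
            rw [h0, eLpNorm_norm]
          rw [heq, eLpNorm_sub_comm]
          exact (hty k).le
        calc ∑ k : Fin n, eLpNorm (fun ω => |t k ω - y k ω|) q μ
            ≤ ∑ _k : Fin n, ENNReal.ofReal ε := Finset.sum_le_sum fun k _ => hone k
          _ = ENNReal.ofReal (n * ε) := by
              rw [Finset.sum_const, Finset.card_univ, Fintype.card_fin, nsmul_eq_mul,
                ENNReal.ofReal_mul (by positivity), ENNReal.ofReal_natCast]
      have hfin : eLpNorm fY q μ ≠ ∞ := hmY.2.ne
      have hle2 : eLpNorm (fun ω => (∑ k, |t k ω| ^ r') ^ (1 / r')) q μ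
          ≤ eLpNorm fY q μ + ENNReal.ofReal (n * ε) :=
        hmono.trans (htri.trans (add_le_add_right hsum _))
      calc (eLpNorm (fun ω => (∑ k, |t k ω| ^ r') ^ (1 / r')) q μ).toReal
          ≤ (eLpNorm fY q μ + ENNReal.ofReal (n * ε)).toReal :=
            ENNReal.toReal_mono (ENNReal.add_ne_top.2 ⟨hfin, ENNReal.ofReal_ne_top⟩) hle2
        _ = NY + n * ε := by
            rw [ENNReal.toReal_add hfin ENNReal.ofReal_ne_top,
              ENNReal.toReal_ofReal (by positivity)]
    -- main estimate
    have h1 : ∑ k, u (xs k) (ys k) ≤ M * (NX + n * ε) * (NY + n * ε) := by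
      have hcore := core hp0 hp hq0 hq u M hM hpos hrr s t hs ht hfS hfT
      rw [Lp.norm_toLp _ hfS, Lp.norm_toLp _ hfT] at hcore
      refine hcore.trans ?_
      have hS0 : (0:ℝ) ≤ (eLpNorm (fun ω => (∑ k, |s k ω| ^ r) ^ (1 / r)) p μ).toReal :=
        ENNReal.toReal_nonneg
      have hT0 : (0:ℝ) ≤ (eLpNorm (fun ω => (∑ k, |t k ω| ^ r') ^ (1 / r')) q μ).toReal :=
        ENNReal.toReal_nonneg
      have hNY0 : (0:ℝ) ≤ NY + n * ε := by positivity
      nlinarith [hSle, hTle, mul_le_mul hSle hTle hT0 (by positivity : (0:ℝ) ≤ NX + n * ε)]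
    have h2 : ∑ k, (u (x k - xs k) (y k) + u (xs k) (y k - ys k)) ≤ M * ε * (C + n * ε) := by
      have hterm : ∀ k, u (x k - xs k) (y k) + u (xs k) (y k - ys k)
          ≤ M * ε * (‖y k‖ + (‖x k‖ + ε)) := by
        intro k
        have t1 : u (x k - xs k) (y k) ≤ M * ε * ‖y k‖ := by
          refine (le_abs_self _).trans ((hM _ _).trans ?_)
          have hy0 : (0:ℝ) ≤ ‖y k‖ := norm_nonneg _
          exact mul_le_mul_of_nonneg_right
            (mul_le_mul_of_nonneg_left (hxd k) hM0) hy0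
        have t2 : u (xs k) (y k - ys k) ≤ M * (‖x k‖ + ε) * ε := by
          refine (le_abs_self _).trans ((hM _ _).trans ?_)
          have hy0 : (0:ℝ) ≤ ‖y k - ys k‖ := norm_nonneg _
          exact mul_le_mul (mul_le_mul_of_nonneg_left (hxsn k) hM0) (hyd k) hy0
            (by positivity)
        nlinarith [t1, t2]
      calc ∑ k, (u (x k - xs k) (y k) + u (xs k) (y k - ys k))
          ≤ ∑ k, M * ε * (‖y k‖ + (‖x k‖ + ε)) := Finset.sum_le_sum fun k _ => hterm k
        _ = M * ε * (C + n * ε) := by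
            rw [← Finset.mul_sum]
            congr 1
            have hsum2 : ∑ k : Fin n, (‖y k‖ + (‖x k‖ + ε))
                = (∑ k, (‖y k‖ + ‖x k‖)) + ∑ _k : Fin n, ε := by
              rw [← Finset.sum_add_distrib]
              exact Finset.sum_congr rfl fun k _ => by ring
            rw [hsum2, Finset.sum_const, Finset.card_univ, Fintype.card_fin, nsmul_eq_mul, hC]
    have hsplit : ∑ k, u (x k) (y k)
        = ∑ k, u (xs k) (ys k) + ∑ k, (u (x k - xs k) (y k) + u (xs k) (y k - ys k)) := by
      rw [← Finset.sum_add_distrib]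
      refine Finset.sum_congr rfl fun k _ => ?_
      simp only [map_sub, LinearMap.sub_apply]
      ring
    rw [hsplit]
    linarith [h1, h2]
  have hB : Filter.Tendsto
      (fun ε : ℝ => M * (NX + n * ε) * (NY + n * ε) + M * ε * (C + n * ε))
      (nhdsWithin 0 (Set.Ioi 0)) (nhds (M * NX * NY)) := by
    have hc : Continuous
        (fun ε : ℝ => M * (NX + n * ε) * (NY + n * ε) + M * ε * (C + n * ε)) := by
      fun_prop
    have ht := hc.tendsto 0
    simp only [mul_zero, add_zero, zero_mul] at ht
    exact ht.mono_left nhdsWithin_le_nhds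
  exact ge_of_tendsto hB (eventually_nhdsWithin_of_forall fun ε hε => claim ε hε)

end PosBilinAux


/-- Every positive bounded bilinear form `u : L^{ar}(μ) × L^{ar'}(μ) → ℝ`
(`1 < r < ∞`, `1/r + 1/r' = 1`, `1 ≤ a < ∞`) with `|u(x,y)| ≤ M ‖x‖ ‖y‖`
satisfies the vector-valued inequality (2.3):
`∑ |u(x_k,y_k)| ≤ M ‖(∑ |x_k|^r)^{1/r}‖_{L^{ar}} ‖(∑ |y_k|^{r'})^{1/r'}‖_{L^{ar'}}`. -/
theorem positive_bilinear_vector_valued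
    {Ω : Type*} [MeasurableSpace Ω] (μ : Measure Ω) [SigmaFinite μ]
    (r r' a : ℝ) (hr : 1 < r) (hrr' : 1 / r + 1 / r' = 1) (ha : 1 ≤ a)
    (u : Lp ℝ (ENNReal.ofReal (a * r)) μ →ₗ[ℝ] Lp ℝ (ENNReal.ofReal (a * r')) μ →ₗ[ℝ] ℝ)
    (M : ℝ) (hM : ∀ x y, |u x y| ≤ M * ‖x‖ * ‖y‖)
    (hpos : ∀ x y, (∀ᵐ ω ∂μ, 0 ≤ x ω) → (∀ᵐ ω ∂μ, 0 ≤ y ω) → 0 ≤ u x y) :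
    ∀ (n : ℕ) (x : Fin n → Lp ℝ (ENNReal.ofReal (a * r)) μ)
      (y : Fin n → Lp ℝ (ENNReal.ofReal (a * r')) μ),
      ENNReal.ofReal (∑ k, |u (x k) (y k)|) ≤
        ENNReal.ofReal M *
          eLpNorm (fun ω => (∑ k, |x k ω| ^ r) ^ (1 / r)) (ENNReal.ofReal (a * r)) μ *
          eLpNorm (fun ω => (∑ k, |y k ω| ^ r') ^ (1 / r')) (ENNReal.ofReal (a * r')) μ := by
  classical
  intro n x y
  have hrr : r.HolderConjugate r' := Real.holderConjugate_iff.2 ⟨hr, by simpa [one_div] using hrr'⟩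
  have har1 : 1 ≤ a * r := by nlinarith
  have har'1 : 1 ≤ a * r' := by nlinarith [hrr.symm.lt]
  have hp1 : 1 ≤ ENNReal.ofReal (a * r) := ENNReal.one_le_ofReal.2 har1
  have hq1 : 1 ≤ ENNReal.ofReal (a * r') := ENNReal.one_le_ofReal.2 har'1
  have hptop : ENNReal.ofReal (a * r) ≠ ∞ := ENNReal.ofReal_ne_top
  have hqtop : ENNReal.ofReal (a * r') ≠ ∞ := ENNReal.ofReal_ne_top
  haveI : Fact (1 ≤ ENNReal.ofReal (a * r)) := ⟨hp1⟩
  haveI : Fact (1 ≤ ENNReal.ofReal (a * r')) := ⟨hq1⟩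
  set M' := max M 0 with hM'def
  have hM'0 : 0 ≤ M' := le_max_right _ _
  have hM' : ∀ x' y', |u x' y'| ≤ M' * ‖x'‖ * ‖y'‖ := by
    intro x' y'
    refine (hM x' y').trans ?_
    exact mul_le_mul_of_nonneg_right
      (mul_le_mul_of_nonneg_right (le_max_left M 0) (norm_nonneg x')) (norm_nonneg y')
  have hMeq : ENNReal.ofReal M = ENNReal.ofReal M' := by
    rcases le_total M 0 with h | h
    · rw [ENNReal.ofReal_eq_zero.2 h, hM'def, max_eq_right h, ENNReal.ofReal_zero]
    · rw [hM'def, max_eq_left h]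
  have hσ1 : ∀ k : Fin n, |(if 0 ≤ u (x k) (y k) then (1:ℝ) else -1)| = 1 := by
    intro k
    by_cases h : 0 ≤ u (x k) (y k) <;> simp [h]
  set x' : Fin n → Lp ℝ (ENNReal.ofReal (a * r)) μ :=
    fun k => (if 0 ≤ u (x k) (y k) then (1:ℝ) else -1) • x k with hx'
  have habs : ∀ k, |u (x k) (y k)| = u (x' k) (y k) := by
    intro k
    have h1 : u (x' k) (y k)
        = (if 0 ≤ u (x k) (y k) then (1:ℝ) else -1) * u (x k) (y k) := by
      simp only [hx']
      rw [_root_.map_smul, LinearMap.smul_apply, smul_eq_mul]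
    rw [h1]
    by_cases h : 0 ≤ u (x k) (y k)
    · simp only [h, if_true, one_mul]
      exact abs_of_nonneg h
    · simp only [h, if_false, neg_one_mul]
      exact abs_of_neg (lt_of_not_ge h)
  have hsum : ∑ k, |u (x k) (y k)| = ∑ k, u (x' k) (y k) :=
    Finset.sum_congr rfl fun k _ => habs k
  have hXe : eLpNorm (fun ω => (∑ k, |x' k ω| ^ r) ^ (1 / r)) (ENNReal.ofReal (a * r)) μ
      = eLpNorm (fun ω => (∑ k, |x k ω| ^ r) ^ (1 / r)) (ENNReal.ofReal (a * r)) μ := by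
    refine eLpNorm_congr_ae ?_
    have hae : ∀ᵐ ω ∂μ, ∀ k, x' k ω
        = (if 0 ≤ u (x k) (y k) then (1:ℝ) else -1) * x k ω := by
      rw [ae_all_iff]
      intro k
      have hcs := Lp.coeFn_smul (if 0 ≤ u (x k) (y k) then (1:ℝ) else -1) (x k)
      filter_upwards [hcs] with ω hω
      simp only [hx']
      rw [hω]
      simp
    filter_upwards [hae] with ω hω
    have habs2 : ∀ k : Fin n, |x' k ω| = |x k ω| := by
      intro k
      rw [hω k, abs_mul, hσ1 k, one_mul]
    rw [Finset.sum_congr rfl fun k _ => by rw [habs2 k]]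
  have hRL := PosBilinAux.RL hp1 hptop hq1 hqtop u M' hM'0 hM' hpos hrr x' y
  rw [hXe] at hRL
  rw [hsum, hMeq]
  calc ENNReal.ofReal (∑ k, u (x' k) (y k))
      ≤ ENNReal.ofReal (M' *
          (eLpNorm (fun ω => (∑ k, |x k ω| ^ r) ^ (1 / r)) (ENNReal.ofReal (a * r)) μ).toReal *
          (eLpNorm (fun ω => (∑ k, |y k ω| ^ r') ^ (1 / r')) (ENNReal.ofReal (a * r')) μ).toReal) :=
        ENNReal.ofReal_le_ofReal hRL
    _ = ENNReal.ofReal M' *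
          ENNReal.ofReal
            (eLpNorm (fun ω => (∑ k, |x k ω| ^ r) ^ (1 / r)) (ENNReal.ofReal (a * r)) μ).toReal *
          ENNReal.ofReal
            (eLpNorm (fun ω => (∑ k, |y k ω| ^ r') ^ (1 / r')) (ENNReal.ofReal (a * r')) μ).toReal := by
        rw [ENNReal.ofReal_mul (mul_nonneg hM'0 ENNReal.toReal_nonneg),
          ENNReal.ofReal_mul hM'0]
    _ ≤ ENNReal.ofReal M' *
          eLpNorm (fun ω => (∑ k, |x k ω| ^ r) ^ (1 / r)) (ENNReal.ofReal (a * r)) μ *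
          eLpNorm (fun ω => (∑ k, |y k ω| ^ r') ^ (1 / r')) (ENNReal.ofReal (a * r')) μ :=
        mul_le_mul' (mul_le_mul' le_rfl ENNReal.ofReal_toReal_le) ENNReal.ofReal_toReal_le
end
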